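/- Almost-subadditivity of the approximate variation: for f : T → X, ε > 0 and t ∈ T, with T⁻ = T ∩ (−∞,t] and T⁺ = T ∩ [t,∞), one has V_ε(f,T) ≤ V_ε(f,T⁻) + V_ε(f,T⁺) + 2ε. -/

import Mathlib

open Filter Set

noncomputable def jordanVar {X : Type*} [PseudoMetricSpace X] (f : ℝ → X) (S : Set ℝ) : ENNReal :=
  ⨆ (n : ℕ) (t : Fin (n+1) → ℝ) (_ : Monotone t) (_ : ∀ i, t i ∈ S),
    ∑ i : Fin n, edist (f (t i.succ)) (f (t i.castSucc))

noncomputable def appVar {X : Type*} [PseudoMetricSpace X] (ε : ℝ) (f : ℝ → X) (S : Set ℝ) : ENNReal :=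
  ⨅ (g : ℝ → X) (_ : jordanVar g S < ⊤) (_ : ∀ t ∈ S, dist (f t) (g t) ≤ ε), jordanVar g S

lemma jordanVar_eq_eVariationOn {X : Type*} [PseudoMetricSpace X] (f : ℝ → X) (S : Set ℝ) :
    jordanVar f S = eVariationOn f S := by
  apply le_antisymm
  · refine iSup_le fun n => iSup_le fun tt => iSup_le fun hmono => iSup_le fun hmem => ?_
    set u : ℕ → ℝ := fun i => tt ⟨min i n, by omega⟩ with hu
    have humono : Monotone u := fun i j hij => hmono (by simp [Fin.mk_le_mk]; omega)
    have humem : ∀ i, u i ∈ S := fun i => hmem _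
    have hsum : ∑ i : Fin n, edist (f (tt i.succ)) (f (tt i.castSucc))
        = ∑ i ∈ Finset.range n, edist (f (u (i+1))) (f (u i)) := by
      rw [← Fin.sum_univ_eq_sum_range (fun i => edist (f (u (i+1))) (f (u i))) n]
      refine Finset.sum_congr rfl fun i _ => ?_
      have h1 : u (i.val + 1) = tt i.succ := by
        simp only [hu]; congr 1; apply Fin.ext; simp
      have h2 : u i.val = tt i.castSucc := by
        simp only [hu]; congr 1; apply Fin.ext; simp
      rw [h1, h2]
    rw [hsum]; exact eVariationOn.sum_le (f := f) (n := n) humono humem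
  · refine iSup_le ?_; rintro ⟨n, u, hu, us⟩
    set tt : Fin (n+1) → ℝ := fun j => u j.val with htt
    have hmono : Monotone tt := fun a b hab => hu hab
    have hmem : ∀ i, tt i ∈ S := fun i => us _
    have hsum : ∑ i ∈ Finset.range n, edist (f (u (i+1))) (f (u i))
        = ∑ i : Fin n, edist (f (tt i.succ)) (f (tt i.castSucc)) := by
      rw [← Fin.sum_univ_eq_sum_range (fun i => edist (f (u (i+1))) (f (u i))) n]
      refine Finset.sum_congr rfl fun i _ => ?_
      simp [htt]
    rw [hsum]
    exact le_iSup_of_le n <| le_iSup_of_le tt <| le_iSup_of_le hmono <| le_iSup_of_le hmem le_rfl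

/-- Changing a function at the least point of a set changes the variation by at most
`edist (g x) (h x)`. -/
lemma eVariationOn_le_of_eq_off_least {X : Type*} [PseudoMetricSpace X] (g h : ℝ → X)
    (s : Set ℝ) (x : ℝ) (hx : IsLeast s x) (hgh : ∀ y ∈ s, y ≠ x → g y = h y) :
    eVariationOn g s ≤ eVariationOn h s + edist (g x) (h x) := by
  classical
  refine iSup_le ?_
  rintro ⟨n, u, hu, us⟩
  have hterm : ∀ i ∈ Finset.range n, edist (g (u (i+1))) (g (u i))
      ≤ edist (h (u (i+1))) (h (u i))
        + (if u i = x ∧ u (i+1) ≠ x then edist (g x) (h x) else 0) := by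
    intro i _
    by_cases h1 : u i = x
    · by_cases h2 : u (i+1) = x
      · have hz : edist (g (u (i + 1))) (g (u i)) = 0 := by rw [h1, h2, edist_self]
        exact le_trans (le_of_eq hz) zero_le
      · rw [if_pos ⟨h1, h2⟩, hgh _ (us _) h2, h1]
        refine (edist_triangle _ (h x) _).trans ?_
        rw [edist_comm (h x) (g x)]
    · have h2 : u (i+1) ≠ x := by
        intro h2
        exact h1 (le_antisymm (h2 ▸ hu (Nat.le_succ i)) (hx.2 (us i)))
      rw [hgh _ (us _) h1, hgh _ (us _) h2]
      simp [h1]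
  refine (Finset.sum_le_sum hterm).trans ?_
  rw [Finset.sum_add_distrib]
  refine add_le_add (eVariationOn.sum_le (f := h) (n := n) hu us) ?_
  rw [← Finset.sum_filter]
  have hcard : ((Finset.range n).filter fun i => u i = x ∧ u (i+1) ≠ x).card ≤ 1 := by
    refine Finset.card_le_one.2 fun a ha b hb => ?_
    simp only [Finset.mem_filter] at ha hb
    by_contra hne
    rcases Nat.lt_or_ge a b with hab | hab
    · have : u (a+1) = x := le_antisymm ((hu (Nat.succ_le_of_lt hab)).trans hb.2.1.le)
        (hx.2 (us _))
      exact ha.2.2 this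
    · have hba : b < a := lt_of_le_of_ne hab (fun h => hne h.symm)
      have : u (b+1) = x := le_antisymm ((hu (Nat.succ_le_of_lt hba)).trans ha.2.1.le)
        (hx.2 (us _))
      exact hb.2.2 this
  calc (((Finset.range n).filter fun i => u i = x ∧ u (i+1) ≠ x).sum
          fun _ => edist (g x) (h x))
      = ((Finset.range n).filter fun i => u i = x ∧ u (i+1) ≠ x).card • edist (g x) (h x) :=
        Finset.sum_const _
    _ ≤ 1 • edist (g x) (h x) := nsmul_le_nsmul_left zero_le hcard
    _ = edist (g x) (h x) := one_nsmul _

theorem stmt11 {X : Type*} [PseudoMetricSpace X] (T : Set ℝ) (hT : T.Nonempty)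
    (f : ℝ → X) (ε : ℝ) (hε : 0 < ε) (t : ℝ) (ht : t ∈ T) :
    appVar ε f T ≤
      appVar ε f (T ∩ Set.Iic t) + appVar ε f (T ∩ Set.Ici t) + 2 * ENNReal.ofReal ε := by
  set S₁ := T ∩ Set.Iic t with hS₁
  set S₂ := T ∩ Set.Ici t with hS₂
  have hS1g : IsGreatest S₁ t := ⟨⟨ht, Set.mem_Iic.2 le_rfl⟩, fun y hy => hy.2⟩
  have hS2l : IsLeast S₂ t := ⟨⟨ht, Set.mem_Ici.2 le_rfl⟩, fun y hy => hy.2⟩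
  have hunion : S₁ ∪ S₂ = T := by
    rw [hS₁, hS₂, ← Set.inter_union_distrib_left, Set.Iic_union_Ici, Set.inter_univ]
  -- key step: gluing two admissible approximants
  have key : ∀ g₁ g₂ : ℝ → X, jordanVar g₁ S₁ < ⊤ → (∀ s ∈ S₁, dist (f s) (g₁ s) ≤ ε) →
      jordanVar g₂ S₂ < ⊤ → (∀ s ∈ S₂, dist (f s) (g₂ s) ≤ ε) →
      appVar ε f T ≤ jordanVar g₁ S₁ + jordanVar g₂ S₂ + 2 * ENNReal.ofReal ε := by
    intro g₁ g₂ h1fin h1cl h2fin h2cl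
    set g : ℝ → X := fun x => if x ≤ t then g₁ x else g₂ x with hg
    have hgt : g t = g₁ t := by simp [hg]
    have hg1 : ∀ x ∈ S₁, g x = g₁ x := fun x hx => if_pos hx.2
    have hg2 : ∀ x ∈ S₂, x ≠ t → g x = g₂ x := by
      intro x hx hne
      have : ¬ x ≤ t := fun hle => hne (le_antisymm hle hx.2)
      simp [hg, this]
    have hedist : edist (g₁ t) (g₂ t) ≤ 2 * ENNReal.ofReal ε := by
      rw [edist_dist]
      have hd : dist (g₁ t) (g₂ t) ≤ ε + ε := by
        calc dist (g₁ t) (g₂ t) ≤ dist (g₁ t) (f t) + dist (f t) (g₂ t) := dist_triangle _ _ _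
          _ ≤ ε + ε := add_le_add (by rw [dist_comm]; exact h1cl t hS1g.1) (h2cl t hS2l.1)
      calc ENNReal.ofReal (dist (g₁ t) (g₂ t)) ≤ ENNReal.ofReal (ε + ε) :=
            ENNReal.ofReal_le_ofReal hd
        _ = 2 * ENNReal.ofReal ε := by rw [ENNReal.ofReal_add hε.le hε.le, two_mul]
    have hbound : jordanVar g T ≤ jordanVar g₁ S₁ + jordanVar g₂ S₂ + 2 * ENNReal.ofReal ε := by
      rw [jordanVar_eq_eVariationOn, jordanVar_eq_eVariationOn, jordanVar_eq_eVariationOn,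
        ← hunion, eVariationOn.union g hS1g hS2l]
      have e1 : eVariationOn g S₁ = eVariationOn g₁ S₁ := eVariationOn.eq_of_eqOn hg1
      have e2 : eVariationOn g S₂ ≤ eVariationOn g₂ S₂ + 2 * ENNReal.ofReal ε := by
        refine (eVariationOn_le_of_eq_off_least g g₂ S₂ t hS2l hg2).trans ?_
        rw [hgt]
        exact add_le_add le_rfl hedist
      calc eVariationOn g S₁ + eVariationOn g S₂
          ≤ eVariationOn g₁ S₁ + (eVariationOn g₂ S₂ + 2 * ENNReal.ofReal ε) := by
            rw [e1]; exact add_le_add le_rfl e2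
        _ = eVariationOn g₁ S₁ + eVariationOn g₂ S₂ + 2 * ENNReal.ofReal ε := by ring
    have hgfin : jordanVar g T < ⊤ :=
      lt_of_le_of_lt hbound (by
        refine ENNReal.add_lt_top.2 ⟨ENNReal.add_lt_top.2 ⟨h1fin, h2fin⟩, ?_⟩
        exact ENNReal.mul_lt_top (by norm_num) ENNReal.ofReal_lt_top)
    have hgcl : ∀ s ∈ T, dist (f s) (g s) ≤ ε := by
      intro s hs
      by_cases hst : s ≤ t
      · rw [hg1 s ⟨hs, hst⟩]; exact h1cl s ⟨hs, hst⟩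
      · have hst' : t ≤ s := (not_le.1 hst).le
        rw [hg2 s ⟨hs, hst'⟩ (fun h => hst (h.le))]
        exact h2cl s ⟨hs, hst'⟩
    calc appVar ε f T ≤ jordanVar g T := by
          refine iInf_le_of_le g ?_
          refine iInf_le_of_le hgfin ?_
          exact iInf_le _ hgcl
      _ ≤ _ := hbound
  -- now conclude by approximating the two infima
  rcases eq_top_or_lt_top (appVar ε f S₁) with h1 | h1
  · rw [h1, top_add, top_add]; exact le_top
  rcases eq_top_or_lt_top (appVar ε f S₂) with h2 | h2
  · rw [h2, add_top, top_add]; exact le_top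
  refine ENNReal.le_of_forall_pos_le_add fun η hη _ => ?_
  have hη2 : ((η : ENNReal) / 2) ≠ 0 := by
    simp [ENNReal.div_eq_zero_iff, hη.ne']
  have hlt1 : appVar ε f S₁ < appVar ε f S₁ + η / 2 := ENNReal.lt_add_right h1.ne hη2
  have hlt2 : appVar ε f S₂ < appVar ε f S₂ + η / 2 := ENNReal.lt_add_right h2.ne hη2
  rw [appVar, iInf_lt_iff] at hlt1 hlt2
  obtain ⟨g₁, hg₁⟩ := hlt1
  rw [iInf_lt_iff] at hg₁
  obtain ⟨h1fin, hg₁⟩ := hg₁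
  rw [iInf_lt_iff] at hg₁
  obtain ⟨h1cl, hg₁⟩ := hg₁
  obtain ⟨g₂, hg₂⟩ := hlt2
  rw [iInf_lt_iff] at hg₂
  obtain ⟨h2fin, hg₂⟩ := hg₂
  rw [iInf_lt_iff] at hg₂
  obtain ⟨h2cl, hg₂⟩ := hg₂
  have hg₁' : jordanVar g₁ S₁ < appVar ε f S₁ + (η : ENNReal) / 2 := hg₁
  have hg₂' : jordanVar g₂ S₂ < appVar ε f S₂ + (η : ENNReal) / 2 := hg₂
  calc appVar ε f T ≤ jordanVar g₁ S₁ + jordanVar g₂ S₂ + 2 * ENNReal.ofReal ε :=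
        key g₁ g₂ h1fin h1cl h2fin h2cl
    _ ≤ (appVar ε f S₁ + η / 2) + (appVar ε f S₂ + η / 2) + 2 * ENNReal.ofReal ε :=
        add_le_add (add_le_add hg₁'.le hg₂'.le) le_rfl
    _ = appVar ε f S₁ + appVar ε f S₂ + 2 * ENNReal.ofReal ε + ((η : ENNReal) / 2 + η / 2) := by
        ring
    _ = appVar ε f S₁ + appVar ε f S₂ + 2 * ENNReal.ofReal ε + η := by
        rw [ENNReal.add_halves]
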